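/- For a chi-square random variable C with d degrees of freedom, for all x > 0, P(C ≥ d + 2√(dx) + 2x) ≤ exp(-x). -/

import Mathlib

open MeasureTheory ProbabilityTheory Real
open scoped ENNReal NNReal

lemma LM_pdf_mul (t y : ℝ) :
    gaussianPDFReal 0 1 y * rexp (t * y ^ 2)
      = (Real.sqrt (2 * π))⁻¹ * rexp (-(1/2 - t) * y ^ 2) := by
  simp only [gaussianPDFReal, NNReal.coe_one, mul_one, sub_zero]
  rw [mul_assoc, ← Real.exp_add]
  ring_nf

lemma LM_integrable_gauss {t : ℝ} (ht : t < 1/2) :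
    Integrable (fun y => rexp (t * y ^ 2)) (gaussianReal 0 1) := by
  have hb : 0 < 1/2 - t := by linarith
  rw [gaussianReal_of_var_ne_zero 0 one_ne_zero]
  have hd : gaussianPDF 0 1 = fun y => ((gaussianPDFReal 0 1 y).toNNReal : ℝ≥0∞) := by
    funext y; rfl
  rw [hd, integrable_withDensity_iff_integrable_smul
    (f := fun y => (gaussianPDFReal 0 1 y).toNNReal)
    (measurable_gaussianPDFReal 0 1).real_toNNReal]
  have : (fun y => ((gaussianPDFReal 0 1 y).toNNReal : ℝ≥0) • rexp (t * y ^ 2))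
      = fun y => (Real.sqrt (2 * π))⁻¹ * rexp (-(1/2 - t) * y ^ 2) := by
    funext y
    rw [NNReal.smul_def, Real.coe_toNNReal _ (gaussianPDFReal_nonneg 0 1 y), smul_eq_mul, LM_pdf_mul]
  rw [this]
  exact (integrable_exp_neg_mul_sq hb).const_mul _

lemma LM_integral_gauss {t : ℝ} (ht : t < 1/2) :
    ∫ y, rexp (t * y ^ 2) ∂(gaussianReal 0 1) = (Real.sqrt (1 - 2*t))⁻¹ := by
  have hb : 0 < 1/2 - t := by linarith
  rw [gaussianReal_of_var_ne_zero 0 one_ne_zero]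
  have hd : gaussianPDF 0 1 = fun y => ((gaussianPDFReal 0 1 y).toNNReal : ℝ≥0∞) := by
    funext y; rfl
  rw [hd, integral_withDensity_eq_integral_smul
    (f := fun y => (gaussianPDFReal 0 1 y).toNNReal)
    (measurable_gaussianPDFReal 0 1).real_toNNReal]
  have : (fun y => ((gaussianPDFReal 0 1 y).toNNReal : ℝ≥0) • rexp (t * y ^ 2))
      = fun y => (Real.sqrt (2 * π))⁻¹ * rexp (-(1/2 - t) * y ^ 2) := by
    funext y
    rw [NNReal.smul_def, Real.coe_toNNReal _ (gaussianPDFReal_nonneg 0 1 y), smul_eq_mul,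
      LM_pdf_mul]
  rw [this, integral_const_mul, integral_gaussian]
  have h2 : Real.sqrt (π / (1/2 - t)) = Real.sqrt π / Real.sqrt (1/2 - t) :=
    Real.sqrt_div Real.pi_pos.le _
  have h3 : Real.sqrt (2 * π) = Real.sqrt 2 * Real.sqrt π :=
    Real.sqrt_mul (by norm_num) _
  have h4 : Real.sqrt (1 - 2*t) = Real.sqrt 2 * Real.sqrt (1/2 - t) := by
    rw [show (1:ℝ) - 2*t = 2 * (1/2 - t) by ring, Real.sqrt_mul (by norm_num : (0:ℝ) ≤ 2)]
  have hπ : 0 < Real.sqrt π := Real.sqrt_pos.2 Real.pi_pos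
  have h2' : 0 < Real.sqrt (1/2 - t) := Real.sqrt_pos.2 hb
  have hs2 : 0 < Real.sqrt 2 := Real.sqrt_pos.2 (by norm_num)
  rw [h2, h3, h4, mul_inv, div_eq_mul_inv, mul_inv]
  calc (Real.sqrt 2)⁻¹ * (Real.sqrt π)⁻¹ * (Real.sqrt π * (Real.sqrt (1/2 - t))⁻¹)
      = ((Real.sqrt π)⁻¹ * Real.sqrt π) * ((Real.sqrt 2)⁻¹ * (Real.sqrt (1/2 - t))⁻¹) := by ring
    _ = (Real.sqrt 2)⁻¹ * (Real.sqrt (1/2 - t))⁻¹ := by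
        rw [inv_mul_cancel₀ hπ.ne', one_mul]

lemma LM_int_mu {Ω : Type*} [MeasurableSpace Ω] {μ : Measure Ω} {X : Ω → ℝ}
    (hX : Measurable X) (hg : μ.map X = gaussianReal 0 1) {t : ℝ} (ht : t < 1/2) :
    Integrable (fun ω => rexp (t * X ω ^ 2)) μ := by
  have h := LM_integrable_gauss ht
  rw [← hg] at h
  exact (integrable_map_measure
    (Measurable.aestronglyMeasurable (by measurability)) hX.aemeasurable).1 h

lemma LM_mgf {Ω : Type*} [MeasurableSpace Ω] {μ : Measure Ω} {X : Ω → ℝ}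
    (hX : Measurable X) (hg : μ.map X = gaussianReal 0 1) {t : ℝ} (ht : t < 1/2) :
    mgf (fun ω => X ω ^ 2) μ t = (Real.sqrt (1 - 2*t))⁻¹ := by
  rw [mgf, ← LM_integral_gauss ht, ← hg,
    integral_map hX.aemeasurable (Measurable.aestronglyMeasurable (by measurability))]

/-- Laurent–Massart upper tail bound for a chi-square random variable with `d`
degrees of freedom, realized as `C = ∑ i, (c i)^2` for i.i.d. standard Gaussians `c i`. -/
theorem chi_square_upper_tail
    {Ω : Type*} [MeasurableSpace Ω] (μ : Measure Ω) [IsProbabilityMeasure μ]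
    (d : ℕ) (c : Fin d → Ω → ℝ)
    (hmeas : ∀ i, Measurable (c i))
    (hindep : iIndepFun c μ)
    (hgauss : ∀ i, μ.map (c i) = gaussianReal 0 1)
    (x : ℝ) (hx : 0 < x) :
    μ {ω | (d : ℝ) + 2 * Real.sqrt (d * x) + 2 * x ≤ ∑ i, (c i ω) ^ 2}
      ≤ ENNReal.ofReal (Real.exp (-x)) := by
  rcases Nat.eq_zero_or_pos d with hd0 | hd
  · subst hd0
    have hset : {ω : Ω | ((0:ℕ) : ℝ) + 2 * Real.sqrt ((0:ℕ) * x) + 2 * x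
        ≤ ∑ i : Fin 0, (c i ω) ^ 2} = ∅ := by
      ext ω
      simp only [Set.mem_setOf_eq, Set.mem_empty_iff_false, iff_false, not_le,
        Finset.univ_eq_empty, Finset.sum_empty, Nat.cast_zero, zero_mul, Real.sqrt_zero]
      linarith
    rw [hset]
    simp
  · -- main case
    set dr : ℝ := (d : ℝ) with hdr_def
    have hdr0 : 0 < dr := by exact_mod_cast Nat.cast_pos.mpr hd
    set sq : ℝ := Real.sqrt (dr * x) with hsq_def
    have hsq0 : 0 < sq := Real.sqrt_pos.2 (by positivity)
    set a : ℝ := dr + 2 * sq + 2 * x with ha_def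
    have ha0 : 0 < a := by positivity
    have had : dr < a := by nlinarith
    set t : ℝ := (a - dr) / (2 * a) with ht_def
    have ht0 : 0 < t := div_pos (by linarith) (by positivity)
    have ht : t < 1 / 2 := by
      rw [ht_def, div_lt_iff₀ (by positivity)]
      nlinarith
    have h1t : 1 - 2 * t = dr / a := by
      rw [ht_def]; field_simp; ring
    have h1t' : 0 < 1 - 2 * t := by rw [h1t]; positivity
    -- independence & integrability for the squares
    have hYindep : iIndepFun
        (fun i => fun ω => (c i ω) ^ 2) μ := by
      have := hindep.comp (fun _ => fun y : ℝ => y ^ 2)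
        (fun _ => measurable_id.pow_const 2)
      exact this
    have hYmeas : ∀ i, Measurable (fun ω => (c i ω) ^ 2) :=
      fun i => (hmeas i).pow_const 2
    have hint : ∀ i ∈ Finset.univ, Integrable
        (fun ω => rexp (t * (c i ω) ^ 2)) μ :=
      fun i _ => LM_int_mu (hmeas i) (hgauss i) ht
    have hInt : Integrable
        (fun ω => rexp (t * (∑ i, fun ω => (c i ω) ^ 2) ω)) μ :=
      hYindep.integrable_exp_mul_sum hYmeas hint
    have hChern := measure_ge_le_exp_mul_mgf (μ := μ)
      (X := ∑ i, fun ω => (c i ω) ^ 2) a ht0.le hInt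
    have hmgf : mgf (∑ i, fun ω => (c i ω) ^ 2) μ t
        = ((Real.sqrt (1 - 2 * t))⁻¹) ^ d := by
      rw [hYindep.mgf_sum hYmeas Finset.univ]
      rw [Finset.prod_congr rfl (fun i _ => LM_mgf (hmeas i) (hgauss i) ht)]
      simp
    -- set rewriting
    have hsetEq : {ω : Ω | (d : ℝ) + 2 * Real.sqrt ((d:ℝ) * x) + 2 * x
          ≤ ∑ i, (c i ω) ^ 2}
        = {ω : Ω | a ≤ (∑ i, fun ω => (c i ω) ^ 2) ω} := by
      ext ω
      simp only [Set.mem_setOf_eq, Finset.sum_apply]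
      exact Iff.rfl
    -- the analytic bound
    have hbound : rexp (-t * a) * ((Real.sqrt (1 - 2 * t))⁻¹) ^ d ≤ rexp (-x) := by
      have hsqrt : Real.sqrt (1 - 2 * t) = rexp (Real.log (1 - 2 * t) / 2) := by
        rw [← Real.log_sqrt h1t'.le, Real.exp_log (Real.sqrt_pos.2 h1t')]
      rw [hsqrt, ← Real.exp_neg, ← Real.exp_nat_mul, ← Real.exp_add, Real.exp_le_exp]
      -- reduce to a real inequality
      have hta : t * a = (a - dr) / 2 := by
        rw [ht_def]; field_simp
      have hlog1t : Real.log (1 - 2 * t) = Real.log dr - Real.log a := by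
        rw [h1t, Real.log_div hdr0.ne' ha0.ne']
      set s : ℝ := Real.sqrt (x / dr) with hs_def
      have hs0 : 0 ≤ s := Real.sqrt_nonneg _
      have hs2 : s ^ 2 = x / dr := Real.sq_sqrt (by positivity)
      have hsq_eq : sq = dr * s := by
        rw [hsq_def, hs_def, show dr * x = dr ^ 2 * (x / dr) by field_simp,
          Real.sqrt_mul (sq_nonneg dr), Real.sqrt_sq hdr0.le]
      have hx_eq : x = dr * s ^ 2 := by rw [hs2]; field_simp
      have ha_div : a / dr = 1 + 2 * s + 2 * s ^ 2 := by
        rw [ha_def, hsq_eq, hx_eq]; field_simp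
      have hlog : Real.log (a / dr) ≤ 2 * s := by
        rw [Real.log_le_iff_le_exp (by positivity)]
        calc a / dr = 1 + 2 * s + (2 * s) ^ 2 / 2 := by rw [ha_div]; ring
          _ ≤ rexp (2 * s) := Real.quadratic_le_exp_of_nonneg (by positivity)
      have hlogd : Real.log (a / dr) = Real.log a - Real.log dr :=
        Real.log_div ha0.ne' hdr0.ne'
      have hkey : dr * (Real.log a - Real.log dr) ≤ 2 * sq := by
        rw [← hlogd, hsq_eq]
        nlinarith [mul_le_mul_of_nonneg_left hlog hdr0.le]
      have hda : a - dr = 2 * sq + 2 * x := by rw [ha_def]; ring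
      rw [hlog1t, ← hdr_def]
      linarith
    -- conclude in ℝ≥0∞
    rw [hsetEq, ← ENNReal.ofReal_toReal (measure_ne_top μ _)]
    exact ENNReal.ofReal_le_ofReal (hChern.trans (by rw [hmgf]; exact hbound))
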